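/- arXiv:0909.5234 — 2 statements merged into one kernel-verified Lean document; each statement's English description precedes it below -/
import Mathlib

section
/- The series ∑_{n=1}^∞ (1 - 2^{-2n}) · ζ(2n) / (n·(2n+1)) converges to ln 2, where ζ is the Riemann zeta function. -/
section ZetaLogTwoAux

open Real Filter Finset Topology

lemma oddeven_sums {x : ℝ} (hx0 : 0 < x) (hx1 : x < 1) :
    HasSum (fun k : ℕ => x ^ (2*k+1) / (2*k+1)) ((log (1+x) - log (1-x))/2) ∧
    HasSum (fun k : ℕ => x ^ (2*k+2) / (2*k+2)) ((-log (1-x) - log (1+x))/2) := by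
  have hax : |x| < 1 := by rw [abs_of_pos hx0]; exact hx1
  have h1 : HasSum (fun n : ℕ => x ^ (n + 1) / (n + 1)) (-log (1 - x)) :=
    Real.hasSum_pow_div_log_of_abs_lt_one hax
  have h2 : HasSum (fun n : ℕ => (-x) ^ (n + 1) / (n + 1)) (-log (1 + x)) := by
    have := Real.hasSum_pow_div_log_of_abs_lt_one (x := -x) (by rwa [abs_neg])
    simpa using this
  have hsO : Summable (fun k : ℕ => x ^ (2*k+1) / (2*k+1)) := by
    have := h1.summable.comp_injective (i := fun k : ℕ => 2*k)
      (fun a b h => by simp only at h; omega)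
    refine this.congr fun k => ?_
    simp only [Function.comp_apply]; push_cast; ring_nf
  have hsE : Summable (fun k : ℕ => x ^ (2*k+2) / (2*k+2)) := by
    have := (h1.summable.comp_injective (i := fun k : ℕ => 2*k+1)
      (fun a b h => by simp only at h; omega))
    refine this.congr fun k => ?_
    simp only [Function.comp_apply]; push_cast; ring_nf
  obtain ⟨sO, hO⟩ := hsO
  obtain ⟨sE, hE⟩ := hsE
  have key1 : HasSum (fun n : ℕ => x ^ (n + 1) / (n + 1)) (sO + sE) := by
    refine HasSum.even_add_odd (hO.congr_fun fun k => ?_) (hE.congr_fun fun k => ?_)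
    · push_cast; ring_nf
    · push_cast; ring_nf
  have key2 : HasSum (fun n : ℕ => (-x) ^ (n + 1) / (n + 1)) (-sO + sE) := by
    refine HasSum.even_add_odd ((hO.neg).congr_fun fun k => ?_)
      (hE.congr_fun fun k => ?_)
    · rw [Odd.neg_pow ⟨k, by ring⟩]
      push_cast; ring_nf
    · rw [Even.neg_pow ⟨k+1, by ring⟩]
      push_cast; ring_nf
  have e1 : sO + sE = -log (1-x) := key1.unique h1
  have e2 : -sO + sE = -log (1+x) := key2.unique h2
  constructor
  · have : sO = (log (1+x) - log (1-x))/2 := by linarith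
    rwa [this] at hO
  · have : sE = (-log (1-x) - log (1+x))/2 := by linarith
    rwa [this] at hE

lemma powser {x : ℝ} (hx0 : 0 < x) (hx1 : x < 1) :
    HasSum (fun n : ℕ => x ^ (2*n+2) / ((n+1)*(2*n+3)))
      (2 + (1-x)/x * log (1-x) - (1+x)/x * log (1+x)) := by
  obtain ⟨hO, hE⟩ := oddeven_sums hx0 hx1
  set sO := (log (1+x) - log (1-x))/2 with hsO
  set sE := (-log (1-x) - log (1+x))/2 with hsE
  have hO' : HasSum (fun k : ℕ => x ^ (2*(k+1)+1) / (2*(k+1)+1)) (sO - x) := by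
    have := (hasSum_nat_add_iff' (f := fun k : ℕ => x ^ (2*k+1) / (2*k+1)) 1).2 hO
    simpa using this
  have hx : x ≠ 0 := ne_of_gt hx0
  have key := (hE.mul_left 2).sub ((hO'.mul_left (2/x)))
  have key2 := key.congr_fun (g := fun n : ℕ => x ^ (2*n+2) / ((n+1)*(2*n+3))) (fun n => by
    have h1 : ((n:ℝ)+1) ≠ 0 := by positivity
    have h2 : (2*(n:ℝ)+3) ≠ 0 := by positivity
    have hp : x ^ (2*(n+1)+1) = x ^ (2*n+2) * x := by ring
    rw [hp]
    push_cast
    field_simp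
    ring)
  have hv : 2 * sE - 2/x * (sO - x) = 2 + (1-x)/x * log (1-x) - (1+x)/x * log (1+x) := by
    rw [hsO, hsE]
    field_simp
    ring
  rwa [hv] at key2

noncomputable def tfun : ℕ → ℝ
  | 0 => 2 - 2 * Real.log 2
  | (m+1) => 2 + 2 * Real.log (2*(m:ℝ)+3) + (2*(m:ℝ)+2) * Real.log (2*(m:ℝ)+2)
      - (2*(m:ℝ)+4) * Real.log (2*(m:ℝ)+4)

lemma hassum_tm (m : ℕ) :
    HasSum (fun n : ℕ => ((2*(m:ℝ)+3)⁻¹) ^ (2*n+2) / ((n+1)*(2*n+3))) (tfun (m+1)) := by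
  set q : ℝ := 2*(m:ℝ)+3 with hq
  have hm0 : (0:ℝ) ≤ (m:ℝ) := Nat.cast_nonneg m
  have hq3 : (3:ℝ) ≤ q := by rw [hq]; linarith
  have hq0 : (0:ℝ) < q := by linarith
  have hx0 : (0:ℝ) < q⁻¹ := inv_pos.2 hq0
  have hx1 : q⁻¹ < 1 := by
    rw [inv_lt_one_iff₀]; right; linarith
  have h := powser hx0 hx1
  have h1m : 1 - q⁻¹ = (q-1)/q := by field_simp
  have h1p : 1 + q⁻¹ = (q+1)/q := by field_simp
  have hval : 2 + (1-q⁻¹)/q⁻¹ * log (1-q⁻¹) - (1+q⁻¹)/q⁻¹ * log (1+q⁻¹) = tfun (m+1) := by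
    rw [h1m, h1p, Real.log_div (by linarith) (by linarith), Real.log_div (by linarith) (by linarith)]
    have e1 : ((q:ℝ)-1)/q/q⁻¹ = q - 1 := by field_simp
    have e2 : ((q:ℝ)+1)/q/q⁻¹ = q + 1 := by field_simp
    rw [e1, e2]
    show _ = 2 + 2 * Real.log (2*(m:ℝ)+3) + (2*(m:ℝ)+2) * Real.log (2*(m:ℝ)+2)
      - (2*(m:ℝ)+4) * Real.log (2*(m:ℝ)+4)
    have hqm1 : q - 1 = 2*(m:ℝ)+2 := by rw [hq]; ring
    have hqp1 : q + 1 = 2*(m:ℝ)+4 := by rw [hq]; ring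
    rw [hqm1, hqp1, ← hq]
    ring
  rwa [hval] at h

lemma harmonic_partial (N : ℕ) :
    ∑ n ∈ range N, (1:ℝ) / ((n+1)*(2*n+3)) = 2 - 2 * (((harmonic (2*N+1) : ℝ)) - (harmonic N : ℝ)) := by
  induction N with
  | zero => simp [harmonic]
  | succ N ih =>
    rw [Finset.sum_range_succ, ih]
    have h1 : (2*(N+1)+1) = (2*N+1) + 1 + 1 := by ring
    rw [h1, harmonic_succ (2*N+1+1), harmonic_succ (2*N+1), harmonic_succ N]
    push_cast
    have hN1 : ((N:ℝ)+1) ≠ 0 := by positivity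
    have h2 : (2*(N:ℝ)+3) ≠ 0 := by positivity
    have h3 : (2*(N:ℝ)+1+1) ≠ 0 := by positivity
    field_simp
    ring

noncomputable def E (N : ℕ) : ℝ := Real.log (N.factorial)

lemma Estep (N : ℕ) : E (N+1) = Real.log ((N:ℝ)+1) + E N := by
  unfold E
  rw [Nat.factorial_succ]
  push_cast
  rw [Real.log_mul (by positivity) (by exact_mod_cast Nat.cast_ne_zero.2 N.factorial_ne_zero)]

noncomputable def G (M : ℕ) : ℝ :=
  2 + 2*M - (2*M+2)*Real.log (2*(M:ℝ)+2) - 2*M*Real.log 2 + 2*E (2*M+1) - 2*E M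

lemma sum_tfun (M : ℕ) : ∑ m ∈ range (M+1), tfun m = G M := by
  induction M with
  | zero =>
    simp [G, E, tfun]
  | succ M ih =>
    rw [Finset.sum_range_succ, ih]
    have hL : Real.log (2*(M:ℝ)+2) = Real.log 2 + Real.log ((M:ℝ)+1) := by
      rw [← Real.log_mul (by norm_num) (by positivity)]
      ring_nf
    have hEM : E (M+1) = Real.log ((M:ℝ)+1) + E M := Estep M
    have b2 : E (2*M+2) = Real.log (2*(M:ℝ)+2) + E (2*M+1) := by
      have h := Estep (2*M+1)
      rw [show (2*M+1)+1 = 2*M+2 from rfl] at h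
      rw [h]; push_cast; ring_nf
    have a2 : E (2*(M+1)+1) = Real.log (2*(M:ℝ)+3) + E (2*M+2) := by
      have h := Estep (2*M+2)
      rw [show (2*M+2)+1 = 2*(M+1)+1 by omega] at h
      rw [h]; push_cast; ring_nf
    unfold G
    rw [a2, b2, hEM]
    simp only [tfun]
    push_cast
    have h42 : Real.log (2*((M:ℝ)+1)+2) = Real.log (2*(M:ℝ)+4) := by congr 1; ring
    rw [h42, hL]
    ring

lemma harmonic_diff_tendsto :
    Tendsto (fun N : ℕ => ((harmonic (2*N+1) : ℝ)) - (harmonic N : ℝ)) atTop (𝓝 (Real.log 2)) := by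
  have h1 : Tendsto (fun n : ℕ => ((harmonic n : ℝ)) - Real.log n) atTop
      (𝓝 Real.eulerMascheroniConstant) := Real.tendsto_harmonic_sub_log
  have hsub : Tendsto (fun N : ℕ => 2*N+1) atTop atTop := by
    apply tendsto_atTop_atTop_of_monotone (fun a b h => by omega)
    exact fun b => ⟨b, by omega⟩
  have h2 := h1.comp hsub
  have h3 : Tendsto (fun N : ℕ => Real.log (2*N+1) - Real.log N) atTop (𝓝 (Real.log 2)) := by
    have key : Tendsto (fun N : ℕ => (2:ℝ) + 1/N) atTop (𝓝 2) := by
      have := tendsto_one_div_atTop_nhds_zero_nat (𝕜 := ℝ)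
      simpa using tendsto_const_nhds.add this
    have := (key.log (by norm_num))
    refine this.congr' ?_
    filter_upwards [eventually_ge_atTop 1] with N hN
    have hN0 : (0:ℝ) < N := by exact_mod_cast hN
    rw [← Real.log_div (by positivity) (by positivity)]
    congr 1
    push_cast
    field_simp
  have := (h2.sub h1).add h3
  rw [sub_self, zero_add] at this
  have heq : ∀ N : ℕ, ((fun n : ℕ => ((harmonic n : ℝ)) - Real.log n) ∘ (fun N => 2*N+1)) N
      - (((harmonic N : ℝ)) - Real.log N) + (Real.log (2*N+1) - Real.log N)
      = ((harmonic (2*N+1) : ℝ)) - (harmonic N : ℝ) := by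
    intro N
    simp only [Function.comp_apply]
    push_cast
    ring
  exact this.congr heq

lemma hassum_t0 : HasSum (fun n : ℕ => (1:ℝ) / ((n+1)*(2*n+3))) (2 - 2 * Real.log 2) := by
  rw [hasSum_iff_tendsto_nat_of_nonneg (fun n => by positivity)]
  have := harmonic_diff_tendsto
  have h2 : Tendsto (fun N : ℕ => 2 - 2*(((harmonic (2*N+1) : ℝ)) - (harmonic N : ℝ))) atTop
      (𝓝 (2 - 2*Real.log 2)) := by
    exact (tendsto_const_nhds.sub (this.const_mul 2))
  exact h2.congr (fun N => (harmonic_partial N).symm)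

noncomputable def LS (N : ℕ) : ℝ := Real.log (Stirling.stirlingSeq N)

lemma E_eq (N : ℕ) (hN : 1 ≤ N) :
    E N = LS N + 1/2*Real.log (2*(N:ℝ)) + (N:ℝ)*Real.log (N:ℝ) - N := by
  have h := Stirling.log_stirlingSeq_formula N
  have hN0 : (0:ℝ) < (N:ℝ) := by exact_mod_cast hN
  have hlogdiv : Real.log ((N:ℝ) / Real.exp 1) = Real.log (N:ℝ) - 1 := by
    rw [Real.log_div (ne_of_gt hN0) (Real.exp_ne_zero 1), Real.log_exp]
  rw [hlogdiv] at h
  unfold E LS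
  rw [show Real.log (Stirling.stirlingSeq N) = LS N from rfl] at h
  unfold LS at h
  linarith [h]  -- h : LS = E - ... ; want E = ...

lemma G_decomp (M : ℕ) (hM : 1 ≤ M) :
    G M = 2*LS (2*M+1) - 2*LS M + Real.log (2 + 1/(M:ℝ))
      + (2*(M:ℝ)+2) * Real.log (1 - (1/2)/((M:ℝ)+1))
      + 2*((M:ℝ) * Real.log (1 + (1/2)/(M:ℝ))) := by
  have hM0 : (0:ℝ) < (M:ℝ) := by exact_mod_cast hM
  have hE1 := E_eq (2*M+1) (by omega)
  have hE2 := E_eq M hM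
  unfold G
  rw [hE1, hE2]
  push_cast
  -- log identities
  have l1 : Real.log (2*(M:ℝ)+2) = Real.log 2 + Real.log ((M:ℝ)+1) := by
    rw [← Real.log_mul (by norm_num) (by positivity)]; ring_nf
  have l3 : Real.log (2*(M:ℝ)+1) = Real.log 2 + Real.log ((M:ℝ)+1/2) := by
    rw [← Real.log_mul (by norm_num) (by positivity)]; ring_nf
  have l4 : Real.log (2*(2*(M:ℝ)+1)) = Real.log 2 + Real.log (2*(M:ℝ)+1) := by
    rw [← Real.log_mul (by norm_num) (by positivity)]
  have l5 : Real.log (2*(M:ℝ)) = Real.log 2 + Real.log (M:ℝ) := by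
    rw [← Real.log_mul (by norm_num) (by positivity)]
  have l6 : Real.log (2 + 1/(M:ℝ)) = Real.log (2*(M:ℝ)+1) - Real.log (M:ℝ) := by
    rw [show (2 + 1/(M:ℝ)) = (2*(M:ℝ)+1)/(M:ℝ) by field_simp <;> ring]
    rw [Real.log_div (by positivity) (by positivity)]
  have l7 : Real.log (1 - (1/2)/((M:ℝ)+1)) = Real.log ((M:ℝ)+1/2) - Real.log ((M:ℝ)+1) := by
    rw [show (1 - (1/2)/((M:ℝ)+1)) = ((M:ℝ)+1/2)/((M:ℝ)+1) by field_simp <;> ring]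
    rw [Real.log_div (by positivity) (by positivity)]
  have l8 : Real.log (1 + (1/2)/(M:ℝ)) = Real.log ((M:ℝ)+1/2) - Real.log (M:ℝ) := by
    rw [show (1 + (1/2)/(M:ℝ)) = ((M:ℝ)+1/2)/(M:ℝ) by field_simp <;> ring]
    rw [Real.log_div (by positivity) (by positivity)]
  rw [l1, l4, l5, l6, l7, l8, l3]
  ring

lemma G_tendsto : Tendsto G atTop (𝓝 (Real.log 2)) := by
  have hpi : Real.sqrt π ≠ 0 := by positivity
  have hLS : Tendsto LS atTop (𝓝 (Real.log (Real.sqrt π))) :=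
    Stirling.tendsto_stirlingSeq_sqrt_pi.log hpi
  have hsub : Tendsto (fun M : ℕ => 2*M+1) atTop atTop := by
    apply tendsto_atTop_atTop_of_monotone (fun a b h => by omega)
    exact fun b => ⟨b, by omega⟩
  have h1 : Tendsto (fun M : ℕ => LS (2*M+1)) atTop (𝓝 (Real.log (Real.sqrt π))) :=
    hLS.comp hsub
  have hNat : Tendsto (fun M : ℕ => (M:ℝ)) atTop atTop := tendsto_natCast_atTop_atTop
  have hA : Tendsto (fun M : ℕ => Real.log (2 + 1/(M:ℝ))) atTop (𝓝 (Real.log 2)) := by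
    have key : Tendsto (fun M : ℕ => (2:ℝ) + 1/(M:ℝ)) atTop (𝓝 2) := by
      simpa using tendsto_const_nhds.add (tendsto_one_div_atTop_nhds_zero_nat (𝕜 := ℝ))
    exact key.log (by norm_num)
  have hB : Tendsto (fun M : ℕ => (2*(M:ℝ)+2) * Real.log (1 - (1/2)/((M:ℝ)+1)))
      atTop (𝓝 (-1)) := by
    have hshift : Tendsto (fun M : ℕ => (M:ℝ)+1) atTop atTop :=
      tendsto_atTop_add_const_right atTop 1 hNat
    have key := (Real.tendsto_mul_log_one_add_div_atTop (-(1/2))).comp hshift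
    have key2 := key.const_mul 2
    norm_num at key2
    refine (key2.congr fun M => ?_)
    rw [show (1:ℝ) + -(1/2)/((M:ℝ)+1) = 1 - (1/2)/((M:ℝ)+1) by ring]
    ring
  have hC : Tendsto (fun M : ℕ => 2*((M:ℝ) * Real.log (1 + (1/2)/(M:ℝ))))
      atTop (𝓝 1) := by
    have key := (Real.tendsto_mul_log_one_add_div_atTop (1/2)).comp hNat
    have key2 := key.const_mul 2
    norm_num at key2
    exact key2
  have total := ((((h1.const_mul 2).sub (hLS.const_mul 2)).add hA).add hB).add hC
  norm_num at total
  refine total.congr' ?_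
  filter_upwards [eventually_ge_atTop 1] with M hM
  rw [G_decomp M hM]
  norm_num


lemma tfun_nonneg (m : ℕ) : 0 ≤ tfun m := by
  cases m with
  | zero => exact hassum_t0.nonneg (fun n => by positivity)
  | succ m => exact (hassum_tm m).nonneg (fun n => by positivity)

lemma hT : HasSum tfun (Real.log 2) := by
  rw [hasSum_iff_tendsto_nat_of_nonneg tfun_nonneg]
  rw [← tendsto_add_atTop_iff_nat 1]
  exact G_tendsto.congr fun M => (sum_tfun M).symm

noncomputable def F (p : ℕ × ℕ) : ℝ :=
  ((2*(p.1:ℝ)+1)⁻¹) ^ (2*p.2+2) / ((p.2+1)*(2*p.2+3))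

lemma fiber_m (m : ℕ) : HasSum (fun n : ℕ => F (m, n)) (tfun m) := by
  cases m with
  | zero =>
    refine hassum_t0.congr_fun fun n => ?_
    simp [F]
  | succ m =>
    refine (hassum_tm m).congr_fun fun n => ?_
    simp only [F]
    push_cast
    ring_nf

lemma hassum_F : HasSum F (Real.log 2) := by
  have hnn : 0 ≤ F := fun p => by unfold F; positivity
  have hsumm : Summable F := by
    rw [summable_prod_of_nonneg hnn]
    constructor
    · exact fun m => (fiber_m m).summable
    · refine hT.summable.congr fun m => ?_
      exact ((fiber_m m).tsum_eq).symm
  have h := hsumm.hasSum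
  have h2 : HasSum tfun (∑' p, F p) := h.prod_fiberwise fiber_m
  rwa [h2.unique hT] at h

noncomputable def Z (n : ℕ) : ℝ := ∑' k : ℕ, ((k:ℝ)⁻¹) ^ (2*n+2)

lemma summable_Z (n : ℕ) : Summable (fun k : ℕ => ((k:ℝ)⁻¹) ^ (2*n+2)) := by
  have : Summable (fun k : ℕ => 1 / (k:ℝ) ^ (2*n+2)) :=
    (Real.summable_one_div_nat_pow).2 (by omega)
  refine this.congr fun k => ?_
  rw [inv_pow, one_div]

lemma fiber_n (n : ℕ) :
    HasSum (fun m : ℕ => F (m, n))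
      ((1 - ((2:ℝ)⁻¹) ^ (2*n+2)) * Z n / ((n+1)*(2*n+3))) := by
  have hZ : HasSum (fun k : ℕ => ((k:ℝ)⁻¹) ^ (2*n+2)) (Z n) := (summable_Z n).hasSum
  have heven : HasSum (fun m : ℕ => (((2*m:ℕ):ℝ)⁻¹) ^ (2*n+2)) (((2:ℝ)⁻¹)^(2*n+2) * Z n) := by
    refine (hZ.mul_left (((2:ℝ)⁻¹)^(2*n+2))).congr_fun fun m => ?_
    push_cast
    rw [mul_inv, mul_pow]
  have hsodd : Summable (fun m : ℕ => (((2*m+1:ℕ):ℝ)⁻¹) ^ (2*n+2)) := by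
    have := (summable_Z n).comp_injective (i := fun m : ℕ => 2*m+1)
      (fun a b h => by simp only at h; omega)
    exact this
  obtain ⟨sodd, hodd⟩ := hsodd
  have htot : HasSum (fun k : ℕ => ((k:ℝ)⁻¹) ^ (2*n+2)) (((2:ℝ)⁻¹)^(2*n+2) * Z n + sodd) :=
    HasSum.even_add_odd heven hodd
  have : sodd = (1 - ((2:ℝ)⁻¹) ^ (2*n+2)) * Z n := by
    have := htot.unique hZ
    linarith [this]
  rw [this] at hodd
  have := hodd.div_const (((n:ℝ)+1)*(2*(n:ℝ)+3))
  refine this.congr_fun fun m => ?_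
  simp only [F]
  push_cast
  ring_nf

lemma hassum_real :
    HasSum (fun n : ℕ => (1 - ((2:ℝ)⁻¹) ^ (2*n+2)) * Z n / ((n+1)*(2*n+3)))
      (Real.log 2) := by
  have h2 : HasSum (F ∘ (Equiv.prodComm ℕ ℕ)) (Real.log 2) :=
    ((Equiv.prodComm ℕ ℕ).hasSum_iff).2 hassum_F
  exact h2.prod_fiberwise fiber_n

end ZetaLogTwoAux

open Complex

/-- The series `∑_{n=1}^∞ (1 - 2^{-2n}) ζ(2n) / (n (2n+1))` converges to `ln 2`. -/
theorem dancs_he_zeta_series_log_two :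
    HasSum (fun n : ℕ =>
      (1 - (2 : ℂ) ^ (-(2 * ((n : ℤ) + 1)))) * riemannZeta ((2 * (n + 1) : ℕ) : ℂ) /
        (((n : ℂ) + 1) * (2 * ((n : ℂ) + 1) + 1)))
      ((Real.log 2 : ℝ) : ℂ) := by
  have hC := Complex.hasSum_ofReal.2 hassum_real
  refine hC.congr_fun fun n => ?_
  have hzeta : riemannZeta ((2 * (n + 1) : ℕ) : ℂ) = ((Z n : ℝ) : ℂ) := by
    rw [zeta_nat_eq_tsum_of_gt_one (by omega : 1 < 2*(n+1))]
    rw [Z, Complex.ofReal_tsum]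
    congr 1
    funext k
    push_cast
    rw [inv_pow, one_div, show 2*(n+1) = 2*n+2 by ring]
  have hpow : (2:ℂ) ^ (-(2 * ((n:ℤ) + 1))) = ((2:ℂ)⁻¹) ^ (2*n+2) := by
    rw [show -(2*((n:ℤ)+1)) = -((2*n+2 : ℕ) : ℤ) by push_cast; ring,
      zpow_neg, zpow_natCast, inv_pow]
  rw [hzeta, hpow]
  push_cast
  ring
end

section
/- For every positive integer m, the infinite series ∑_{k=0}^∞ (−1)^k · π^{2k} · E_{2k+1}(1)/(2k+2m+3)! satisfies π² · ∑_{k=0}^∞ (−1)^k · π^{2k} · E_{2k+1}(1)/(2k+2m+3)! = 4 · ∑_{n=1}^∞ (1 − 2^{−2n}) · (2n−1)!/(2n+2m+1)! · ζ(2n). -/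
set_option maxHeartbeats 1000000

open Real Nat Complex

/-- The `n`-th Euler polynomial, defined (equivalently to the generating-function
definition `2 e^{xt}/(e^t+1) = ∑ E_n(x) t^n / n!`) via Bernoulli polynomials by
`E_n(x) = (2/(n+1)) (B_{n+1}(x) - 2^{n+1} B_{n+1}(x/2))`. -/
noncomputable def eulerPoly (n : ℕ) : Polynomial ℚ :=
  (2 / (n + 1 : ℚ)) • (Polynomial.bernoulli (n + 1) -
    (2 ^ (n + 1) : ℚ) • ((Polynomial.bernoulli (n + 1)).comp
      (Polynomial.C (1 / 2) * Polynomial.X)))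

section Aux

open PowerSeries Finset

lemma rescaled_bps : rescale (2:ℚ) (bernoulliPowerSeries ℚ) * (PowerSeries.exp ℚ + 1)
    = 2 * bernoulliPowerSeries ℚ := by
  have hexp : PowerSeries.exp ℚ - 1 ≠ 0 := by
    intro h
    have := congrArg (PowerSeries.coeff (R := ℚ) 1) h
    simp [coeff_exp] at this
  apply mul_right_cancel₀ hexp
  have key : rescale (2:ℚ) (bernoulliPowerSeries ℚ) * (rescale 2 (PowerSeries.exp ℚ) - 1)
      = rescale 2 PowerSeries.X := by
    rw [← map_one (rescale (2:ℚ)), ← map_sub, ← map_mul]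
    congr 1
    simpa using bernoulliPowerSeries_mul_exp_sub_one ℚ
  have hee : PowerSeries.exp ℚ * PowerSeries.exp ℚ = rescale (2:ℚ) (PowerSeries.exp ℚ) := by
    have := PowerSeries.exp_mul_exp_eq_exp_add (1:ℚ) 1
    norm_num at this
    exact this
  calc rescale (2:ℚ) (bernoulliPowerSeries ℚ) * (PowerSeries.exp ℚ + 1) * (PowerSeries.exp ℚ - 1)
      = rescale (2:ℚ) (bernoulliPowerSeries ℚ) * (PowerSeries.exp ℚ * PowerSeries.exp ℚ - 1) := by
        ring
    _ = rescale (2:ℚ) PowerSeries.X := by rw [hee, key]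
    _ = 2 * bernoulliPowerSeries ℚ * (PowerSeries.exp ℚ - 1) := by
        rw [rescale_X,
          show (2:ℚ⟦X⟧) * bernoulliPowerSeries ℚ * (PowerSeries.exp ℚ - 1)
            = 2 * (bernoulliPowerSeries ℚ * (PowerSeries.exp ℚ - 1)) by ring,
          bernoulliPowerSeries_mul_exp_sub_one]
        rw [show (2:ℚ⟦X⟧) = PowerSeries.C (R := ℚ) 2 from (map_ofNat (PowerSeries.C (R := ℚ)) 2).symm]

lemma sum_choose_two_pow_bernoulli (n : ℕ) :
    ∑ i ∈ range (n+1), (n.choose i : ℚ) * 2^i * bernoulli i = (2 - 2^n) * bernoulli n := by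
  have hfac : ∀ m : ℕ, (m ! : ℚ) ≠ 0 := fun m => Nat.cast_ne_zero.mpr (Nat.factorial_ne_zero m)
  have h := congrArg (PowerSeries.coeff (R := ℚ) n) rescaled_bps
  rw [show (2 : ℚ⟦X⟧) * bernoulliPowerSeries ℚ = PowerSeries.C (R := ℚ) 2 * bernoulliPowerSeries ℚ by
        rw [map_ofNat], PowerSeries.coeff_C_mul, mul_add, map_add, PowerSeries.coeff_mul] at h
  simp only [bernoulliPowerSeries, coeff_rescale, coeff_mk, coeff_exp, PowerSeries.coeff_one,
    Algebra.algebraMap_self, RingHom.id_apply, map_one] at h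
  rw [Finset.Nat.sum_antidiagonal_eq_sum_range_succ
    (fun p q => 2 ^ p * (bernoulli p / p !) * ((1:ℚ) / q !))] at h
  have hterm : ∀ i ∈ range (n+1),
      2 ^ i * (bernoulli i / i !) * ((1:ℚ) / (n - i)!)
        = (n.choose i : ℚ) * 2^i * bernoulli i / n ! := by
    intro i hi
    rw [mem_range] at hi
    rw [Nat.cast_choose ℚ (Nat.lt_succ_iff.mp hi)]
    field_simp
  rw [Finset.sum_congr rfl hterm, ← Finset.sum_div] at h
  have h2 : (∑ i ∈ range (n+1), (n.choose i : ℚ) * 2^i * bernoulli i) / n !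
      + 2^n * (bernoulli n / n !) = 2 * (bernoulli n / n !) := by
    simpa using h
  field_simp at h2
  linarith [h2]

lemma bernoulli_poly_eval_half (n : ℕ) :
    (Polynomial.bernoulli n).eval (1/2 : ℚ) = (2 - 2^n) / 2^n * bernoulli n := by
  rw [Polynomial.bernoulli, Polynomial.eval_finset_sum]
  rw [div_mul_eq_mul_div, eq_div_iff (pow_ne_zero n (two_ne_zero' ℚ)), Finset.sum_mul]
  rw [← sum_choose_two_pow_bernoulli n]
  refine Finset.sum_congr rfl fun i hi => ?_
  rw [Finset.mem_range] at hi
  have hin : i ≤ n := Nat.lt_succ_iff.mp hi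
  rw [Polynomial.eval_monomial]
  have : ((2:ℚ))^n = 2^(n-i) * 2^i := by rw [← pow_add, Nat.sub_add_cancel hin]
  rw [this]
  rw [show ((1:ℚ)/2) ^ (n-i) = (2 ^ (n-i))⁻¹ by rw [one_div, inv_pow]]
  field_simp

lemma eulerPoly_odd_eval_one (k : ℕ) :
    (eulerPoly (2*k+1)).eval 1 = 2 * (2^(2*k+2) - 1) * bernoulli (2*k+2) / (2*k+2 : ℚ) := by
  have h1 : (Polynomial.bernoulli (2*k+2)).eval (1:ℚ) = bernoulli (2*k+2) := by
    rw [Polynomial.bernoulli_eval_one, ← bernoulli_eq_bernoulli'_of_ne_one (by omega)]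
  have h2 := bernoulli_poly_eval_half (2*k+2)
  have hne : ((2:ℚ)*k+2) ≠ 0 := by positivity
  rw [eulerPoly]
  rw [Polynomial.eval_smul, smul_eq_mul, Polynomial.eval_sub, Polynomial.eval_smul, smul_eq_mul,
    Polynomial.eval_comp]
  simp only [Polynomial.eval_mul, Polynomial.eval_C, Polynomial.eval_X, mul_one,
    show 2*k+1+1 = 2*k+2 from rfl]
  rw [h1, h2]
  have hp : ((2:ℚ))^(2*k+2) ≠ 0 := by positivity
  push_cast
  field_simp
  ring

lemma zeta_even_norm_le (j : ℕ) : ‖riemannZeta ((2*(j+1) : ℕ) : ℂ)‖ ≤ 2 := by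
  have he : 1 < 2*(j+1) := by omega
  have hsum : Summable (fun n : ℕ => 1 / (n:ℝ) ^ (2*(j+1))) :=
    Real.summable_one_div_nat_pow.mpr he
  have hsum2 : Summable (fun n : ℕ => 1 / (n:ℝ) ^ 2) :=
    Real.summable_one_div_nat_pow.mpr one_lt_two
  rw [zeta_nat_eq_tsum_of_gt_one he]
  have hcast : ∑' n : ℕ, 1 / (n:ℂ) ^ (2*(j+1))
      = ((∑' n : ℕ, 1 / (n:ℝ) ^ (2*(j+1)) : ℝ) : ℂ) := by
    rw [Complex.ofReal_tsum]
    norm_num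
  rw [hcast, Complex.norm_real, Real.norm_eq_abs]
  have hnn : 0 ≤ ∑' n : ℕ, 1 / (n:ℝ) ^ (2*(j+1)) :=
    tsum_nonneg fun n => by positivity
  rw [_root_.abs_of_nonneg hnn]
  have hle : ∑' n : ℕ, 1 / (n:ℝ) ^ (2*(j+1)) ≤ ∑' n : ℕ, 1 / (n:ℝ) ^ 2 := by
    refine Summable.tsum_le_tsum (fun n => ?_) hsum hsum2
    rcases Nat.eq_zero_or_pos n with rfl | hn
    · simp
    · apply one_div_le_one_div_of_le (by positivity)
      exact pow_le_pow_right₀ (by exact_mod_cast hn) (by omega)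
  refine hle.trans ?_
  rw [hasSum_zeta_two.tsum_eq]
  nlinarith [Real.pi_lt_d2, Real.pi_gt_three]

end Aux

/-- For every positive integer `m`,
`π² ∑_{k=0}^∞ (-1)^k π^{2k} E_{2k+1}(1)/(2k+2m+3)!`
`= 4 ∑_{n=1}^∞ (1 - 2^{-2n}) (2n-1)!/(2n+2m+1)! ζ(2n)`. -/
theorem dancs_he_tail_eq_zeta_series (m : ℕ) (hm : 0 < m) :
    ∃ S T : ℂ,
      HasSum (fun k : ℕ =>
        (((-1 : ℝ) ^ k * π ^ (2 * k) *
          (((eulerPoly (2 * k + 1)).eval 1 : ℚ) : ℝ) / ((2 * k + 2 * m + 3)! : ℝ) : ℝ) : ℂ)) S ∧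
      HasSum (fun n : ℕ =>
        (1 - (2 : ℂ) ^ (-(2 * ((n : ℤ) + 1)))) *
          (((2 * (n + 1) - 1)! : ℕ) : ℂ) / (((2 * (n + 1) + 2 * m + 1)! : ℕ) : ℂ) *
          riemannZeta ((2 * (n + 1) : ℕ) : ℂ)) T ∧
      (π : ℂ) ^ 2 * S = 4 * T := by
  set b : ℕ → ℂ := fun n =>
    (1 - (2 : ℂ) ^ (-(2 * ((n : ℤ) + 1)))) *
      (((2 * (n + 1) - 1)! : ℕ) : ℂ) / (((2 * (n + 1) + 2 * m + 1)! : ℕ) : ℂ) *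
      riemannZeta ((2 * (n + 1) : ℕ) : ℂ) with hb_def
  -- zpow as real
  have hzp : ∀ n : ℕ, (2 : ℂ) ^ (-(2 * ((n : ℤ) + 1))) = ((2:ℂ) ^ (2*n+2 : ℕ))⁻¹ := by
    intro n
    rw [show (-(2 * ((n:ℤ) + 1))) = -((2*n+2 : ℕ) : ℤ) by push_cast; ring,
      zpow_neg, zpow_natCast]
  -- norm bound
  have hb_bound : ∀ n : ℕ, ‖b n‖ ≤ 2 / ((n:ℝ)+1)^2 := by
    intro n
    rw [hb_def]
    simp only [norm_mul, norm_div]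
    have h1 : ‖1 - (2:ℂ) ^ (-(2 * ((n:ℤ) + 1)))‖ ≤ 1 := by
      have hpos : (0:ℝ) < ((2:ℝ) ^ (2*n+2 : ℕ))⁻¹ := by positivity
      have hle1 : ((2:ℝ) ^ (2*n+2 : ℕ))⁻¹ ≤ 1 := by
        rw [inv_le_one_iff₀]
        right
        exact one_le_pow₀ one_le_two
      rw [hzp n,
        show ((2:ℂ) ^ (2*n+2 : ℕ))⁻¹ = ((((2:ℝ) ^ (2*n+2 : ℕ))⁻¹ : ℝ) : ℂ) by push_cast; rfl,
        ← Complex.ofReal_one, ← Complex.ofReal_sub, Complex.norm_real,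
        Real.norm_eq_abs, _root_.abs_of_nonneg (by linarith)]
      linarith
    have h2 : ‖(((2 * (n + 1) - 1)! : ℕ) : ℂ)‖ / ‖(((2 * (n + 1) + 2 * m + 1)! : ℕ) : ℂ)‖
        ≤ 1 / ((n:ℝ)+1)^2 := by
      rw [Complex.norm_natCast, Complex.norm_natCast]
      rw [div_le_div_iff₀ (by positivity) (by positivity)]
      have hnat : (2*(n+1)-1)! * (n+1)^2 ≤ (2*(n+1)+2*m+1)! := by
        have h1' : (2*(n+1)-1) = 2*n+1 := by omega
        rw [h1']
        calc (2*n+1)! * (n+1)^2 ≤ (2*n+1)! * ((2*n+2)*(2*n+3)) :=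
              Nat.mul_le_mul_left _ (by nlinarith)
          _ = (2*n+3)! := by
              have e1 : (2*n+3)! = (2*n+3)*((2*n+2)*(2*n+1)!) := by
                rw [show 2*n+3 = (2*n+1)+1+1 by ring]
                simp [Nat.factorial_succ]
              rw [e1]
              ring
          _ ≤ (2*(n+1)+2*m+1)! := Nat.factorial_le (by omega)
      calc ((2 * (n + 1) - 1)! : ℝ) * ((n:ℝ)+1)^2
          = (((2*(n+1)-1)! * (n+1)^2 : ℕ) : ℝ) := by push_cast; ring
        _ ≤ (((2*(n+1)+2*m+1)! : ℕ) : ℝ) := by exact_mod_cast hnat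
        _ = 1 * ((2 * (n + 1) + 2 * m + 1)! : ℝ) := by rw [one_mul]
    have h3 : ‖riemannZeta ((2*(n+1) : ℕ) : ℂ)‖ ≤ 2 := zeta_even_norm_le n
    calc ‖1 - (2:ℂ) ^ (-(2 * ((n:ℤ) + 1)))‖ * ‖(((2 * (n + 1) - 1)! : ℕ) : ℂ)‖ /
            ‖(((2 * (n + 1) + 2 * m + 1)! : ℕ) : ℂ)‖ * ‖riemannZeta ((2*(n+1) : ℕ) : ℂ)‖
        = ‖1 - (2:ℂ) ^ (-(2 * ((n:ℤ) + 1)))‖ * (‖(((2 * (n + 1) - 1)! : ℕ) : ℂ)‖ /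
            ‖(((2 * (n + 1) + 2 * m + 1)! : ℕ) : ℂ)‖) * ‖riemannZeta ((2*(n+1) : ℕ) : ℂ)‖ := by
          ring
      _ ≤ 1 * (1 / ((n:ℝ)+1)^2) * 2 := by
          apply mul_le_mul (mul_le_mul h1 h2 (by positivity) zero_le_one) h3 (norm_nonneg _)
          positivity
      _ = 2 / ((n:ℝ)+1)^2 := by ring
  -- summability of the bound
  have hg : Summable (fun n : ℕ => 2 / ((n:ℝ)+1)^2) := by
    have h0 : Summable (fun n : ℕ => 1 / ((n:ℝ))^2) := Real.summable_one_div_nat_pow.mpr one_lt_two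
    have h1 : Summable (fun n : ℕ => 1 / (((n+1):ℕ):ℝ)^2) := (summable_nat_add_iff 1).mpr h0
    have h2 := h1.mul_left 2
    refine h2.congr fun n => ?_
    push_cast
    ring
  have hB : Summable b := Summable.of_norm_bounded hg hb_bound
  set T : ℂ := ∑' n, b n with hT_def
  have hT : HasSum b T := hB.hasSum
  have hπ : (π : ℂ) ≠ 0 := Complex.ofReal_ne_zero.mpr Real.pi_ne_zero
  -- termwise identity
  have hab : ∀ k : ℕ,
      (((-1 : ℝ) ^ k * π ^ (2 * k) *
          (((eulerPoly (2 * k + 1)).eval 1 : ℚ) : ℝ) / ((2 * k + 2 * m + 3)! : ℝ) : ℝ) : ℂ)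
        = 4 / (π:ℂ)^2 * b k := by
    intro k
    simp only [hb_def]
    have hz := riemannZeta_two_mul_nat (k := k+1) (by omega)
    rw [show ((2 * (k + 1) : ℕ) : ℂ) = 2 * ((k+1 : ℕ) : ℂ) by push_cast; ring, hz]
    rw [eulerPoly_odd_eval_one k, hzp k]
    rw [show 2*(k+1)-1 = 2*k+1 by omega, show 2*(k+1) = 2*k+2 by omega,
      show 2*k+2+2*m+1 = 2*k+2*m+3 by omega]
    have hf1 : ((2*k+2*m+3)! : ℝ) ≠ 0 := Nat.cast_ne_zero.mpr (Nat.factorial_ne_zero _)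
    have hf1' : (((2*k+2*m+3)! : ℕ) : ℂ) ≠ 0 := Nat.cast_ne_zero.mpr (Nat.factorial_ne_zero _)
    have hf2 : (((2*k+2)! : ℕ) : ℂ) ≠ 0 := Nat.cast_ne_zero.mpr (Nat.factorial_ne_zero _)
    have hq : ((2:ℚ)*k+2) ≠ 0 := by positivity
    have hqc : ((2:ℂ)*k+2) ≠ 0 := by
      intro h
      have : ((2:ℂ)*k+2) = (((2*k+2 : ℕ)):ℂ) := by push_cast; ring
      rw [this] at h
      exact (Nat.cast_ne_zero.mpr (by omega : 2*k+2 ≠ 0)) h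
    have hp2 : ((2:ℂ))^(2*k+2) ≠ 0 := pow_ne_zero _ (by norm_num)
    have hfs : ((2*k+2)! : ℕ) = (2*k+2) * (2*k+1)! := by
      rw [show 2*k+2 = (2*k+1)+1 from rfl, Nat.factorial_succ]
    rw [hfs]
    have hf3 : (((2*k+1)! : ℕ) : ℂ) ≠ 0 := Nat.cast_ne_zero.mpr (Nat.factorial_ne_zero _)
    push_cast
    field_simp
    ring
  refine ⟨4 / (π:ℂ)^2 * T, T, ?_, hT, ?_⟩
  · have h := hT.mul_left (4 / (π:ℂ)^2)
    have hfun : (fun n => 4 / (π:ℂ)^2 * b n) = (fun k : ℕ =>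
        (((-1 : ℝ) ^ k * π ^ (2 * k) *
          (((eulerPoly (2 * k + 1)).eval 1 : ℚ) : ℝ) / ((2 * k + 2 * m + 3)! : ℝ) : ℝ) : ℂ)) :=
      funext fun k => (hab k).symm
    rwa [hfun] at h
  · rw [show (π:ℂ)^2 * (4/(π:ℂ)^2 * T) = ((π:ℂ)^2/(π:ℂ)^2) * (4*T) by ring,
      div_self (pow_ne_zero 2 hπ), one_mul]
end
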